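/- Let x₁ < ... < xₙ, n ≥ 2, wᵢ > 0 with Σwᵢ = 1, γ > 0 fixed, and define S₀(a) = Σᵢ wᵢγ²/((xᵢ-a)²+γ²), S₁(a) = Σᵢ wᵢγ(xᵢ-a)/((xᵢ-a)²+γ²), Q(a) = Σᵢ wᵢ log((xᵢ-a)² + γ²). For the myriad filter update a' = a + γ·S₁(a)/S₀(a) it holds Q(a') ≤ Q(a), with equality if and only if S₁(a) = 0 (i.e., a' = a). -/

import Mathlib

open Finset Real

/-- For the myriad filter update `a' = a + γ·S₁(a)/S₀(a)`, the objective
`Q(a) = Σᵢ wᵢ log((xᵢ-a)² + γ²)` does not increase, with equality iff `S₁(a) = 0`. -/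
theorem myriad_filter_descent (n : ℕ) (hn : 2 ≤ n) (x : Fin n → ℝ)
    (hx : StrictMono x) (w : Fin n → ℝ) (hw : ∀ i, 0 < w i) (hw1 : ∑ i, w i = 1)
    (γ : ℝ) (hγ : 0 < γ) (a : ℝ) :
    letI S₀ := ∑ i, w i * γ ^ 2 / ((x i - a) ^ 2 + γ ^ 2)
    letI S₁ := ∑ i, w i * (γ * (x i - a)) / ((x i - a) ^ 2 + γ ^ 2)
    letI Q := fun b : ℝ => ∑ i, w i * Real.log ((x i - b) ^ 2 + γ ^ 2)
    letI a' := a + γ * S₁ / S₀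
    Q a' ≤ Q a ∧ (Q a' = Q a ↔ S₁ = 0) := by
  set S₀ := ∑ i, w i * γ ^ 2 / ((x i - a) ^ 2 + γ ^ 2) with hS₀def
  set S₁ := ∑ i, w i * (γ * (x i - a)) / ((x i - a) ^ 2 + γ ^ 2) with hS₁def
  set Q := fun b : ℝ => ∑ i, w i * Real.log ((x i - b) ^ 2 + γ ^ 2) with hQdef
  set a' := a + γ * S₁ / S₀ with ha'def
  haveI : Nonempty (Fin n) := Fin.pos_iff_nonempty.mp (by omega)
  have hD : ∀ i, 0 < (x i - a) ^ 2 + γ ^ 2 := fun i => by positivity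
  have hS₀ : 0 < S₀ := by
    rw [hS₀def]
    apply Finset.sum_pos (fun i _ => ?_) Finset.univ_nonempty
    have := hD i; have := hw i; positivity
  set t : ℝ := S₁ / S₀ with ht
  have ha' : a' = a + γ * t := by rw [ha'def, ht]; ring
  have hN : ∀ i, 0 < (x i - a') ^ 2 + γ ^ 2 := fun i => by positivity
  -- key identity
  have hkey : ∑ i, w i * (((x i - a') ^ 2 + γ ^ 2) / ((x i - a) ^ 2 + γ ^ 2))
      = 1 - S₁ ^ 2 / S₀ := by
    have hterm : ∀ i, w i * (((x i - a') ^ 2 + γ ^ 2) / ((x i - a) ^ 2 + γ ^ 2))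
        = w i - 2 * t * (w i * (γ * (x i - a)) / ((x i - a) ^ 2 + γ ^ 2))
          + t ^ 2 * (w i * γ ^ 2 / ((x i - a) ^ 2 + γ ^ 2)) := by
      intro i
      have hDi := (hD i).ne'
      rw [ha']
      field_simp
      ring
    rw [Finset.sum_congr rfl (fun i _ => hterm i), Finset.sum_add_distrib,
      Finset.sum_sub_distrib, hw1, ← Finset.mul_sum, ← Finset.mul_sum,
      ← hS₁def, ← hS₀def, ht]
    field_simp
    ring
  have hT : (0:ℝ) < 1 - S₁ ^ 2 / S₀ := by
    rw [← hkey]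
    apply Finset.sum_pos (fun i _ => ?_) Finset.univ_nonempty
    have := hD i; have := hN i; have := hw i; positivity
  -- Jensen
  have hjensen : ∑ i, w i * Real.log (((x i - a') ^ 2 + γ ^ 2) / ((x i - a) ^ 2 + γ ^ 2))
      ≤ Real.log (1 - S₁ ^ 2 / S₀) := by
    rw [← hkey]
    have := (strictConcaveOn_log_Ioi.concaveOn).le_map_sum
      (t := Finset.univ) (w := w)
      (p := fun i => ((x i - a') ^ 2 + γ ^ 2) / ((x i - a) ^ 2 + γ ^ 2))
      (fun i _ => (hw i).le) hw1
      (fun i _ => by exact div_pos (hN i) (hD i))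
    simpa using this
  have hsplit : ∑ i, w i * Real.log (((x i - a') ^ 2 + γ ^ 2) / ((x i - a) ^ 2 + γ ^ 2))
      = Q a' - Q a := by
    rw [hQdef]
    simp only
    rw [← Finset.sum_sub_distrib]
    refine Finset.sum_congr rfl (fun i _ => ?_)
    rw [Real.log_div (hN i).ne' (hD i).ne']
    ring
  have hmain : Q a' - Q a ≤ Real.log (1 - S₁ ^ 2 / S₀) := hsplit ▸ hjensen
  have hlogle : Real.log (1 - S₁ ^ 2 / S₀) ≤ 0 := by
    apply Real.log_nonpos hT.le
    have : 0 ≤ S₁ ^ 2 / S₀ := by positivity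
    linarith
  constructor
  · linarith
  · constructor
    · intro heq
      rw [heq] at hmain
      have hlog0 : Real.log (1 - S₁ ^ 2 / S₀) = 0 := le_antisymm hlogle (by linarith)
      have h1 : 1 - S₁ ^ 2 / S₀ = 1 := by
        rcases Real.log_eq_zero.mp hlog0 with h | h | h
        · linarith
        · exact h
        · linarith
      have : S₁ ^ 2 / S₀ = 0 := by linarith
      field_simp at this
      simpa using this
    · intro h
      have : a' = a := by rw [ha', ht, h]; ring
      rw [this]
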